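/- Let u(x,t) = g(x−1,t) − (1/3)·g(x+1,t) for x ≥ 0, t > 0, where g is the one-dimensional heat kernel. Then u(x,t) > 0 and ∂_xx ln(u(x,t)) = −1/(2t) − (1/t²)·((1/3)e^{−x/t})/(1 − (1/3)e^{−x/t})². -/

import Mathlib

open Real

/-- The one-dimensional heat kernel. -/
noncomputable def heatKernel (z t : ℝ) : ℝ :=
  (4 * Real.pi * t) ^ (-(1/2) : ℝ) * Real.exp (-z ^ 2 / (4 * t))

/-- Example 2: solution on the third edge of a three-edge star graph with
a Dirac mass at distance 1 on the third edge only. -/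
noncomputable def uEx2 (x t : ℝ) : ℝ :=
  heatKernel (x - 1) t - (1 / 3) * heatKernel (x + 1) t

theorem example2_log_second_deriv (x t : ℝ) (hx : 0 ≤ x) (ht : 0 < t) :
    0 < uEx2 x t ∧
      deriv (deriv (fun z => Real.log (uEx2 z t))) x
        = -(1 / (2 * t))
            - 1 / t ^ 2 * ((1 / 3) * Real.exp (-x / t) / (1 - (1 / 3) * Real.exp (-x / t)) ^ 2) := by
  have ht' : t ≠ 0 := ht.ne'
  set C : ℝ := (4 * Real.pi * t) ^ (-(1/2) : ℝ) with hC
  have hCpos : 0 < C := Real.rpow_pos_of_pos (by positivity) _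
  -- factorization of u
  have hfact : ∀ z : ℝ, uEx2 z t
      = C * Real.exp (-(z - 1) ^ 2 / (4 * t)) * (1 - (1/3) * Real.exp (-z / t)) := by
    intro z
    have he : Real.exp (-(z + 1) ^ 2 / (4 * t))
        = Real.exp (-(z - 1) ^ 2 / (4 * t)) * Real.exp (-z / t) := by
      rw [← Real.exp_add]
      congr 1
      field_simp
      ring
    simp only [uEx2, heatKernel, ← hC]
    rw [he]
    ring
  -- the open set where everything is positive
  set S : Set ℝ := Set.Ioi (-(t * Real.log 3)) with hS
  have hxS : x ∈ S := by
    have h3 : 0 < Real.log 3 := Real.log_pos (by norm_num)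
    have : -(t * Real.log 3) < 0 := by nlinarith
    exact lt_of_lt_of_le this hx
  have hD : ∀ z ∈ S, 0 < 1 - (1/3) * Real.exp (-z / t) := by
    intro z hz
    have hz' : -(t * Real.log 3) < z := hz
    have h1 : -z / t < Real.log 3 := by
      rw [div_lt_iff₀ ht]
      nlinarith
    have h2 : Real.exp (-z / t) < 3 := by
      calc Real.exp (-z / t) < Real.exp (Real.log 3) := Real.exp_lt_exp.2 h1
        _ = 3 := Real.exp_log (by norm_num)
    linarith
  have hpos : ∀ z ∈ S, 0 < uEx2 z t := by
    intro z hz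
    rw [hfact]
    exact mul_pos (mul_pos hCpos (Real.exp_pos _)) (hD z hz)
  refine ⟨hpos x hxS, ?_⟩
  -- the explicit log formula on S
  have hlog : ∀ z ∈ S, Real.log (uEx2 z t)
      = Real.log C + (-(z - 1) ^ 2 / (4 * t)) + Real.log (1 - (1/3) * Real.exp (-z / t)) := by
    intro z hz
    rw [hfact, Real.log_mul (by positivity) (hD z hz).ne',
      Real.log_mul hCpos.ne' (Real.exp_pos _).ne', Real.log_exp]
  set L : ℝ → ℝ := fun z =>
    Real.log C + (-(z - 1) ^ 2 / (4 * t)) + Real.log (1 - (1/3) * Real.exp (-z / t)) with hLdef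
  set L1 : ℝ → ℝ := fun z =>
    -(z - 1) / (2 * t) + ((1/3) * Real.exp (-z / t) / t) / (1 - (1/3) * Real.exp (-z / t))
    with hL1def
  have hE : ∀ z : ℝ, HasDerivAt (fun y => Real.exp (-y / t)) (Real.exp (-z / t) * (-1 / t)) z := by
    intro z
    exact ((hasDerivAt_id z).neg.div_const t).exp
  have hLder : ∀ z ∈ S, HasDerivAt L (L1 z) z := by
    intro z hz
    have h1 : HasDerivAt (fun y : ℝ => -(y - 1) ^ 2 / (4 * t)) (-(z - 1) / (2 * t)) z := by
      have h := (((hasDerivAt_id z).sub_const 1).pow 2).neg.div_const (4 * t)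
      refine h.congr_deriv ?_
      simp only [id]
      field_simp
      ring
    have hsub : HasDerivAt (fun y => 1 - (1/3) * Real.exp (-y / t))
        (-((1/3) * (Real.exp (-z / t) * (-1 / t)))) z := ((hE z).const_mul (1/3)).const_sub 1
    have h2 := hsub.log (hD z hz).ne'
    have h := ((hasDerivAt_const z (Real.log C)).add h1).add h2
    refine h.congr_deriv ?_
    simp only [hL1def]
    field_simp
    ring
  -- derivative of L1 at x
  have hDx := hD x hxS
  have hL1der : HasDerivAt L1
      (-(1 / (2 * t))
        - 1 / t ^ 2 * ((1/3) * Real.exp (-x / t) / (1 - (1/3) * Real.exp (-x / t)) ^ 2)) x := by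
    have h1 : HasDerivAt (fun y : ℝ => -(y - 1) / (2 * t)) (-1 / (2 * t)) x :=
      ((hasDerivAt_id x).sub_const 1).neg.div_const (2 * t)
    have hN : HasDerivAt (fun y => (1/3) * Real.exp (-y / t) / t)
        ((1/3) * (Real.exp (-x / t) * (-1 / t)) / t) x := (((hE x).const_mul (1/3)).div_const t)
    have hDen : HasDerivAt (fun y => 1 - (1/3) * Real.exp (-y / t))
        (-((1/3) * (Real.exp (-x / t) * (-1 / t)))) x := ((hE x).const_mul (1/3)).const_sub 1
    have h2 := hN.div hDen hDx.ne'
    have h := h1.add h2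
    refine h.congr_deriv ?_
    have h3ne : (3 : ℝ) - Real.exp (-x / t) ≠ 0 := by nlinarith [hDx]
    field_simp [h3ne]
    ring
  -- chain of equalities
  have hopen : IsOpen S := isOpen_Ioi
  have hmem : S ∈ nhds x := hopen.mem_nhds hxS
  have hfd : ∀ z ∈ S, deriv (fun y => Real.log (uEx2 y t)) z = L1 z := by
    intro z hz
    have hfeq : (fun y => Real.log (uEx2 y t)) =ᶠ[nhds z] L :=
      Filter.eventuallyEq_of_mem (hopen.mem_nhds hz) (fun y hy => hlog y hy)
    rw [hfeq.deriv_eq, (hLder z hz).deriv]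
  have hdd : deriv (fun y => Real.log (uEx2 y t)) =ᶠ[nhds x] L1 :=
    Filter.eventuallyEq_of_mem hmem hfd
  rw [hdd.deriv_eq, hL1der.deriv]
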